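/- Grönwall-type bound with a cutoff: let T > 0, κ > 0, let g : [0,T] → ℝ be continuous, nonnegative and nondecreasing, and let Δ : [0,T] → ℝ be differentiable with Δ(t) ≥ 0 for all t, Δ(0) = 0, and Δ'(t) ≤ max{0, g(t) − κ Δ(t)} for all t ∈ [0,T]. Then for every t ∈ [0,T], Δ(t) ≤ min{∫₀ᵗ g(s) ds, g(t)/κ}. -/

import Mathlib

open Set intervalIntegral

/-- Grönwall-type bound with a cutoff: if `g` is continuous, nonnegative
and nondecreasing on `[0,T]`, `Δ ≥ 0`, `Δ(0) = 0` and
`Δ'(t) ≤ max {0, g(t) - κ Δ(t)}` on `[0,T]` with `κ > 0`, then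
`Δ(t) ≤ min {∫₀ᵗ g, g(t)/κ}` for every `t ∈ [0,T]`. -/
theorem stmt_9 (T κ : ℝ) (hT : 0 < T) (hκ : 0 < κ)
    (g : ℝ → ℝ)
    (hgc : ContinuousOn g (Set.Icc 0 T))
    (hg0 : ∀ t ∈ Set.Icc (0 : ℝ) T, 0 ≤ g t)
    (hgmono : MonotoneOn g (Set.Icc 0 T))
    (Δ Δ' : ℝ → ℝ)
    (hΔderiv : ∀ t ∈ Set.Icc (0 : ℝ) T, HasDerivWithinAt Δ (Δ' t) (Set.Icc 0 T) t)
    (hΔ0 : Δ 0 = 0)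
    (hΔpos : ∀ t ∈ Set.Icc (0 : ℝ) T, 0 ≤ Δ t)
    (hineq : ∀ t ∈ Set.Icc (0 : ℝ) T, Δ' t ≤ max 0 (g t - κ * Δ t)) :
    ∀ t ∈ Set.Icc (0 : ℝ) T, Δ t ≤ min (∫ s in (0 : ℝ)..t, g s) (g t / κ) := by
  have hΔcont : ContinuousOn Δ (Icc 0 T) := fun x hx => (hΔderiv x hx).continuousWithinAt
  have hmem : ∀ {x : ℝ}, x ∈ Ico (0 : ℝ) T → Icc (0 : ℝ) T ∈ nhdsWithin x (Ici x) := by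
    intro x hx
    rw [mem_nhdsWithin]
    exact ⟨Iio T, isOpen_Iio, hx.2, fun y hy => ⟨le_trans hx.1 hy.2, le_of_lt hy.1⟩⟩
  have hΔIci : ∀ x ∈ Ico (0 : ℝ) T, HasDerivWithinAt Δ (Δ' x) (Ici x) x := fun x hx =>
    (hΔderiv x ⟨hx.1, le_of_lt hx.2⟩).mono_of_mem_nhdsWithin (hmem hx)
  intro t ht
  obtain ⟨ht0, htT⟩ := ht
  have hsub : Icc (0 : ℝ) t ⊆ Icc 0 T := Icc_subset_Icc le_rfl htT
  have hsubo : Ico (0 : ℝ) t ⊆ Ico 0 T := Ico_subset_Ico le_rfl htT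
  refine le_min ?_ ?_
  · -- Δ t ≤ ∫₀ᵗ g
    have hgint : MeasureTheory.IntegrableOn g (Icc 0 t) :=
      (hgc.mono hsub).integrableOn_compact isCompact_Icc
    have hBcont : ContinuousOn (fun x => ∫ s in (0:ℝ)..x, g s) (Icc 0 t) := by
      have := intervalIntegral.continuousOn_primitive_interval
        (a := (0:ℝ)) (b := t) (f := g) (μ := MeasureTheory.volume)
        (by rwa [uIcc_of_le ht0])
      rwa [uIcc_of_le ht0] at this
    have hB' : ∀ x ∈ Ico (0:ℝ) t, HasDerivWithinAt (fun x => ∫ s in (0:ℝ)..x, g s)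
        (g x) (Ici x) x := by
      intro x hx
      have hx' : x ∈ Icc (0:ℝ) T := ⟨hx.1, le_trans (le_of_lt hx.2) htT⟩
      haveI : Fact (x ∈ Icc (0:ℝ) T) := ⟨hx'⟩
      have hint : IntervalIntegrable g MeasureTheory.volume 0 x := by
        apply ContinuousOn.intervalIntegrable
        apply hgc.mono
        rw [uIcc_of_le hx.1]
        exact Icc_subset_Icc le_rfl hx'.2
      have H : HasDerivWithinAt (fun x => ∫ s in (0:ℝ)..x, g s) (g x) (Icc 0 T) x :=
        intervalIntegral.integral_hasDerivWithinAt_right hint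
          ⟨Icc 0 T, self_mem_nhdsWithin, hgc.aestronglyMeasurable measurableSet_Icc⟩
          (hgc x hx')
      exact H.mono_of_mem_nhdsWithin (hmem (hsubo hx))
    have key := image_le_of_deriv_right_le_deriv_boundary (a := 0) (b := t)
      (hΔcont.mono hsub) (fun x hx => hΔIci x (hsubo hx))
      (by simp [hΔ0]) hBcont hB'
      (fun x hx => by
        have hx' : x ∈ Icc (0:ℝ) T := hsub ⟨hx.1, le_of_lt hx.2⟩
        refine le_trans (hineq x hx') (max_le (hg0 x hx') ?_)
        have := mul_nonneg (le_of_lt hκ) (hΔpos x hx')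
        linarith)
    exact key ⟨ht0, le_rfl⟩
  · -- Δ t ≤ g t / κ
    have hgt0 : 0 ≤ g t := hg0 t ⟨ht0, htT⟩
    have key : ∀ ε > (0:ℝ), Δ t ≤ g t / κ + ε * (t + 1) := by
      intro ε hε
      have hB' : ∀ x ∈ Ico (0:ℝ) t,
          HasDerivWithinAt (fun x => g t / κ + ε * (x + 1)) ε (Ici x) x := by
        intro x _
        have : HasDerivAt (fun x => g t / κ + ε * (x + 1)) ε x := by
          simpa using (((hasDerivAt_id x).add_const (1:ℝ)).const_mul ε).const_add (g t / κ)
        exact this.hasDerivWithinAt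
      have key := image_le_of_deriv_right_lt_deriv_boundary' (a := 0) (b := t)
        (hΔcont.mono hsub) (fun x hx => hΔIci x (hsubo hx))
        (by
          rw [hΔ0]
          positivity)
        (by fun_prop) hB'
        (fun x hx hfB => by
          have hx' : x ∈ Icc (0:ℝ) T := hsub ⟨hx.1, le_of_lt hx.2⟩
          have hgx : g x ≤ g t := hgmono hx' ⟨ht0, htT⟩ (le_of_lt hx.2)
          have hΔx : g x - κ * Δ x < 0 := by
            rw [hfB]
            have h1 : 0 < κ * (ε * (x + 1)) := by
              have : (0:ℝ) < x + 1 := by linarith [hx.1]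
              positivity
            have : κ * (g t / κ + ε * (x + 1)) = g t + κ * (ε * (x + 1)) := by
              field_simp
            rw [this]; linarith
          calc Δ' x ≤ max 0 (g x - κ * Δ x) := hineq x hx'
            _ = 0 := max_eq_left (le_of_lt hΔx)
            _ < ε := hε)
      exact key ⟨ht0, le_rfl⟩
    refine le_of_forall_pos_le_add fun δ hδ => ?_
    have ht1 : (0:ℝ) < t + 1 := by linarith
    have := key (δ / (t + 1)) (by positivity)
    rw [div_mul_cancel₀ _ (ne_of_gt ht1)] at this
    exact this
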